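/- Let -1 ≤ γ₁ < γ₂ ≤ 1, ℓ ∈ ℕ, and 1 ≤ m ≤ ℓ. Then ∫_{γ₁}^{γ₂} P_ℓ^m(u) du = Σ_{k=m}^{ℓ} C(ℓ,k)·C(ℓ+k,k)·(2(-1)^k k!/(k-m)!)·[B((1+γ₂)/2; m/2+1, k−m/2+1) − B((1+γ₁)/2; m/2+1, k−m/2+1)], where B(x; a, b) is the incomplete Beta function. -/

import Mathlib

open Polynomial Finset

noncomputable def legendreP (ℓ : ℕ) (u : ℝ) : ℝ :=
  (1 / (2 ^ ℓ * (Nat.factorial ℓ : ℝ))) * iteratedDeriv ℓ (fun x : ℝ => (x ^ 2 - 1) ^ ℓ) u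

noncomputable def assocLegendre (ℓ m : ℕ) (u : ℝ) : ℝ :=
  (-1 : ℝ) ^ m * (1 - u ^ 2) ^ ((m : ℝ) / 2) * iteratedDeriv m (legendreP ℓ) u

noncomputable def incBeta (x a b : ℝ) : ℝ :=
  ∫ t in (0 : ℝ)..x, t ^ (a - 1) * (1 - t) ^ (b - 1)

lemma eval_one_iter (ℓ k : ℕ) :
    (Polynomial.derivative^[ℓ + k] ((X ^ 2 - 1 : ℝ[X]) ^ ℓ)).eval 1 =
      ((ℓ + k).choose k : ℝ) * (ℓ.factorial : ℝ) * (ℓ.descFactorial k : ℝ) * 2 ^ (ℓ - k) := by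
  have hfac : ((X ^ 2 - 1 : ℝ[X]) ^ ℓ) = (X - C 1) ^ ℓ * (X + C 1) ^ ℓ := by
    rw [← mul_pow]; ring_nf; rw [map_one]; ring_nf
  rw [hfac, Polynomial.iterate_derivative_mul, Polynomial.eval_finset_sum]
  rw [Finset.sum_eq_single k]
  · rw [Polynomial.iterate_derivative_X_sub_pow, Polynomial.iterate_derivative_X_add_pow]
    have h2 : ℓ + k - k = ℓ := by omega
    rw [h2, Nat.descFactorial_self]
    simp only [Nat.sub_self, pow_zero, smul_eq_mul, Polynomial.eval_smul, Polynomial.eval_mul,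
      Polynomial.eval_one, Polynomial.eval_pow, Polynomial.eval_add, Polynomial.eval_X,
      Polynomial.eval_C, Polynomial.eval_natCast]
    norm_num
    ring
  · intro i hi hik
    rw [Polynomial.iterate_derivative_X_sub_pow]
    rcases lt_or_ge i k with h | h
    · have hz : ℓ.descFactorial (ℓ + k - i) = 0 :=
        Nat.descFactorial_eq_zero_iff_lt.2 (by omega)
      simp [hz]
    · have hik' : k < i := lt_of_le_of_ne h (Ne.symm hik)
      have h1 : i ≤ ℓ + k := by have := Finset.mem_range.1 hi; omega
      have hz : (((X - C 1 : ℝ[X]) ^ (ℓ - (ℓ + k - i)))).eval 1 = 0 := by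
        have hne : ℓ - (ℓ + k - i) ≠ 0 := by omega
        simp [zero_pow hne]
      simp only [smul_eq_mul, Polynomial.eval_smul, Polynomial.eval_mul, smul_eq_mul, hz]
      ring
  · intro h
    exact absurd (Finset.mem_range.2 (by omega)) h

lemma expand_legendre (ℓ : ℕ) :
    Polynomial.derivative^[ℓ] ((X ^ 2 - 1 : ℝ[X]) ^ ℓ) =
      ∑ k ∈ range (ℓ + 1),
        C (((ℓ + k).choose k : ℝ) * (ℓ.factorial : ℝ) * (ℓ.descFactorial k : ℝ) * 2 ^ (ℓ - k)
            / (k.factorial : ℝ)) * (X - C 1) ^ k := by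
  set q : ℝ[X] := Polynomial.derivative^[ℓ] ((X ^ 2 - 1 : ℝ[X]) ^ ℓ) with hq
  have hdeg : q.natDegree < ℓ + 1 := by
    have h1 : ((X ^ 2 - 1 : ℝ[X]) ^ ℓ).natDegree ≤ 2 * ℓ := by
      apply (Polynomial.natDegree_pow_le).trans
      have : (X ^ 2 - 1 : ℝ[X]).natDegree ≤ 2 := by compute_degree
      nlinarith
    have h2 := Polynomial.natDegree_iterate_derivative ((X ^ 2 - 1 : ℝ[X]) ^ ℓ) ℓ
    rw [← hq] at h2
    omega
  have hcoeff : ∀ k, (Polynomial.taylor 1 q).coeff k =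
      ((ℓ + k).choose k : ℝ) * (ℓ.factorial : ℝ) * (ℓ.descFactorial k : ℝ) * 2 ^ (ℓ - k)
        / (k.factorial : ℝ) := by
    intro k
    rw [Polynomial.taylor_coeff]
    have hs : (k.factorial : ℝ) * (Polynomial.hasseDeriv k q).eval 1 =
        (Polynomial.derivative^[k] q).eval 1 := by
      have := congrFun (Polynomial.factorial_smul_hasseDeriv (R := ℝ) k) q
      simp only [LinearMap.smul_apply] at this
      rw [← this]
      simp [Polynomial.eval_smul]
    have hk : (Polynomial.derivative^[k] q).eval 1 =
        ((ℓ + k).choose k : ℝ) * (ℓ.factorial : ℝ) * (ℓ.descFactorial k : ℝ) * 2 ^ (ℓ - k) := by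
      rw [hq, ← Function.iterate_add_apply]
      rw [show k + ℓ = ℓ + k by omega]
      exact eval_one_iter ℓ k
    have hkf : (k.factorial : ℝ) ≠ 0 := Nat.cast_ne_zero.2 k.factorial_ne_zero
    field_simp at hs ⊢
    rw [mul_comm] at hs
    rw [mul_comm (k.factorial : ℝ) _, hs, hk]
  conv_lhs => rw [← Polynomial.sum_taylor_eq q 1]
  rw [Polynomial.sum_over_range' _ (by intro n; simp) (ℓ + 1)
    (by rwa [Polynomial.natDegree_taylor])]
  exact Finset.sum_congr rfl fun k _ => by rw [hcoeff]

lemma iteratedDeriv_polyEval (p : ℝ[X]) (n : ℕ) :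
    iteratedDeriv n (fun x => p.eval x) = fun x => (Polynomial.derivative^[n] p).eval x := by
  induction n with
  | zero => simp
  | succ n ih =>
    rw [iteratedDeriv_succ, ih, Function.iterate_succ_apply']
    funext x
    exact Polynomial.deriv _

lemma iteratedDeriv_legendreP (ℓ m : ℕ) (u : ℝ) :
    iteratedDeriv m (legendreP ℓ) u =
      (1 / (2 ^ ℓ * (ℓ.factorial : ℝ))) *
      ∑ k ∈ range (ℓ + 1),
        (((ℓ + k).choose k : ℝ) * (ℓ.factorial : ℝ) * (ℓ.descFactorial k : ℝ) * 2 ^ (ℓ - k)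
            / (k.factorial : ℝ)) * (k.descFactorial m : ℝ) * (u - 1) ^ (k - m) := by
  have hfun : legendreP ℓ = fun u =>
      (C (1 / (2 ^ ℓ * (ℓ.factorial : ℝ))) * Polynomial.derivative^[ℓ]
        ((X ^ 2 - 1 : ℝ[X]) ^ ℓ)).eval u := by
    funext v
    have : (fun x : ℝ => (x ^ 2 - 1) ^ ℓ) = fun x => ((X ^ 2 - 1 : ℝ[X]) ^ ℓ).eval x := by
      funext x; simp
    rw [legendreP, this, iteratedDeriv_polyEval]
    simp
  rw [hfun, iteratedDeriv_polyEval]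
  rw [Polynomial.iterate_derivative_C_mul, expand_legendre,
    Polynomial.iterate_derivative_sum]
  simp only [Polynomial.iterate_derivative_C_mul, Polynomial.iterate_derivative_X_sub_pow,
    Polynomial.eval_mul, Polynomial.eval_C, Polynomial.eval_finset_sum, Polynomial.eval_smul,
    smul_eq_mul, Polynomial.eval_pow, Polynomial.eval_sub, Polynomial.eval_X, Polynomial.eval_one,
    Polynomial.eval_natCast]
  simp only [nsmul_eq_mul, Finset.mul_sum]
  apply Finset.sum_congr rfl
  intro k _
  ring

lemma cont_g (m k : ℕ) (hm : 1 ≤ m) (hmk : m ≤ k) :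
    Continuous (fun t : ℝ => t ^ ((m : ℝ) / 2) * (1 - t) ^ ((k : ℝ) - (m : ℝ) / 2)) := by
  have hm2 : (0 : ℝ) ≤ (m : ℝ) / 2 := by positivity
  have hk2 : (0 : ℝ) ≤ (k : ℝ) - (m : ℝ) / 2 := by
    have : (m : ℝ) ≤ (k : ℝ) := Nat.cast_le.2 hmk
    linarith
  have c1 : Continuous (fun t : ℝ => t ^ ((m : ℝ) / 2)) := by
    rw [continuous_iff_continuousAt]
    exact fun x => Real.continuousAt_rpow_const x _ (Or.inr hm2)
  have c2 : Continuous (fun t : ℝ => (1 - t) ^ ((k : ℝ) - (m : ℝ) / 2)) := by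
    have : Continuous (fun s : ℝ => s ^ ((k : ℝ) - (m : ℝ) / 2)) := by
      rw [continuous_iff_continuousAt]
      exact fun x => Real.continuousAt_rpow_const x _ (Or.inr hk2)
    exact this.comp (continuous_const.sub continuous_id)
  exact c1.mul c2

lemma pointwise_eq (m k : ℕ) (hm : 1 ≤ m) (hmk : m ≤ k) (u : ℝ) (hu1 : -1 ≤ u) (hu2 : u ≤ 1) :
    (1 - u ^ 2) ^ ((m : ℝ) / 2) * (u - 1) ^ (k - m) =
      (-1 : ℝ) ^ (k - m) * 2 ^ k *
        ((2⁻¹ * u + 2⁻¹) ^ ((m : ℝ) / 2) *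
          (1 - (2⁻¹ * u + 2⁻¹)) ^ ((k : ℝ) - (m : ℝ) / 2)) := by
  set p : ℝ := 1 + u with hp
  set s : ℝ := 1 - u with hs
  have hp0 : 0 ≤ p := by simp [hp]; linarith
  have hs0 : 0 ≤ s := by simp [hs]; linarith
  have h1 : (1 - u ^ 2 : ℝ) = p * s := by rw [hp, hs]; ring
  have h2 : (2⁻¹ * u + 2⁻¹ : ℝ) = p / 2 := by rw [hp]; ring
  have h3 : (1 - p / 2 : ℝ) = s / 2 := by rw [hs, hp]; ring
  have h4 : (u - 1 : ℝ) ^ (k - m) = (-1 : ℝ) ^ (k - m) * s ^ (k - m) := by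
    rw [show (u - 1 : ℝ) = -s by rw [hs]; ring, neg_pow]
  have h5 : s ^ ((k : ℝ) - (m : ℝ) / 2) = s ^ ((m : ℝ) / 2) * s ^ (k - m) := by
    have hmk' : ((k - m : ℕ) : ℝ) = (k : ℝ) - (m : ℝ) := by
      push_cast [Nat.cast_sub hmk]; ring
    have hne : (m : ℝ) / 2 + ((k : ℝ) - (m : ℝ)) ≠ 0 := by
      have h1' : (1 : ℝ) ≤ (m : ℝ) := by exact_mod_cast hm
      have h2' : (m : ℝ) ≤ (k : ℝ) := Nat.cast_le.2 hmk
      have h3' : (0:ℝ) < (m : ℝ) / 2 := by linarith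
      have h4' : (0:ℝ) ≤ (k : ℝ) - (m : ℝ) := by linarith
      linarith
    calc s ^ ((k : ℝ) - (m : ℝ) / 2)
        = s ^ ((m : ℝ) / 2 + ((k : ℝ) - (m : ℝ))) := by ring_nf
      _ = s ^ ((m : ℝ) / 2) * s ^ ((k : ℝ) - (m : ℝ)) := Real.rpow_add' hs0 hne
      _ = s ^ ((m : ℝ) / 2) * s ^ (k - m) := by rw [← hmk', Real.rpow_natCast]
  have h6 : ((2 : ℝ)) ^ ((m : ℝ) / 2) * (2 : ℝ) ^ ((k : ℝ) - (m : ℝ) / 2) = 2 ^ k := by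
    rw [← Real.rpow_add (by norm_num : (0:ℝ) < 2)]
    rw [show (m : ℝ) / 2 + ((k : ℝ) - (m : ℝ) / 2) = (k : ℝ) by ring, Real.rpow_natCast]
  have h7 : (p * s) ^ ((m : ℝ) / 2) = p ^ ((m : ℝ) / 2) * s ^ ((m : ℝ) / 2) :=
    Real.mul_rpow hp0 hs0
  have h8 : (p / 2) ^ ((m : ℝ) / 2) = p ^ ((m : ℝ) / 2) / 2 ^ ((m : ℝ) / 2) :=
    Real.div_rpow hp0 (by norm_num) _
  have h9 : (s / 2) ^ ((k : ℝ) - (m : ℝ) / 2) =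
      s ^ ((k : ℝ) - (m : ℝ) / 2) / 2 ^ ((k : ℝ) - (m : ℝ) / 2) :=
    Real.div_rpow hs0 (by norm_num) _
  rw [h1, h2, h3, h4, h7, h8, h9, h5]
  have d1 : (0 : ℝ) < 2 ^ ((m : ℝ) / 2) := Real.rpow_pos_of_pos (by norm_num) _
  have d2 : (0 : ℝ) < 2 ^ ((k : ℝ) - (m : ℝ) / 2) := Real.rpow_pos_of_pos (by norm_num) _
  field_simp
  rw [← h6]
  ring

lemma integral_term (m k : ℕ) (hm : 1 ≤ m) (hmk : m ≤ k) (γ₁ γ₂ : ℝ)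
    (h₁ : -1 ≤ γ₁) (h₁₂ : γ₁ ≤ γ₂) (h₂ : γ₂ ≤ 1) :
    ∫ u in γ₁..γ₂, (1 - u ^ 2) ^ ((m : ℝ) / 2) * (u - 1) ^ (k - m) =
      (-1 : ℝ) ^ (k - m) * 2 ^ (k + 1) *
        (incBeta ((1 + γ₂) / 2) ((m : ℝ) / 2 + 1) ((k : ℝ) - (m : ℝ) / 2 + 1) -
          incBeta ((1 + γ₁) / 2) ((m : ℝ) / 2 + 1) ((k : ℝ) - (m : ℝ) / 2 + 1)) := by
  set g : ℝ → ℝ := fun t => t ^ ((m : ℝ) / 2) * (1 - t) ^ ((k : ℝ) - (m : ℝ) / 2) with hg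
  have hcont : Continuous g := cont_g m k hm hmk
  have hBeta : ∀ x : ℝ, incBeta x ((m : ℝ) / 2 + 1) ((k : ℝ) - (m : ℝ) / 2 + 1) =
      ∫ t in (0:ℝ)..x, g t := by
    intro x
    rw [incBeta]
    congr 1
    funext t
    rw [hg]
    norm_num
  have hΔ : incBeta ((1 + γ₂) / 2) ((m : ℝ) / 2 + 1) ((k : ℝ) - (m : ℝ) / 2 + 1) -
      incBeta ((1 + γ₁) / 2) ((m : ℝ) / 2 + 1) ((k : ℝ) - (m : ℝ) / 2 + 1) =
      ∫ t in ((1 + γ₁) / 2)..((1 + γ₂) / 2), g t := by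
    rw [hBeta, hBeta]
    exact intervalIntegral.integral_interval_sub_left
      (hcont.intervalIntegrable _ _) (hcont.intervalIntegrable _ _)
  have hcongr : ∫ u in γ₁..γ₂, (1 - u ^ 2) ^ ((m : ℝ) / 2) * (u - 1) ^ (k - m) =
      ∫ u in γ₁..γ₂, (-1 : ℝ) ^ (k - m) * 2 ^ k * g (2⁻¹ * u + 2⁻¹) := by
    apply intervalIntegral.integral_congr
    intro u hu
    rw [Set.uIcc_of_le h₁₂] at hu
    exact pointwise_eq m k hm hmk u (by linarith [hu.1]) (by linarith [hu.2])
  rw [hcongr, intervalIntegral.integral_const_mul,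
    intervalIntegral.integral_comp_mul_add g (by norm_num : (2:ℝ)⁻¹ ≠ 0) 2⁻¹]
  rw [show (2:ℝ)⁻¹ * γ₁ + 2⁻¹ = (1 + γ₁) / 2 by ring,
    show (2:ℝ)⁻¹ * γ₂ + 2⁻¹ = (1 + γ₂) / 2 by ring]
  rw [hΔ]
  rw [smul_eq_mul]
  norm_num
  ring

lemma coeff_eq (ℓ m k : ℕ) (hmk : m ≤ k) (hkl : k ≤ ℓ) :
    (-1:ℝ)^m * (1 / (2 ^ ℓ * (ℓ.factorial:ℝ))) *
      (((ℓ + k).choose k : ℝ) * (ℓ.factorial:ℝ) * (ℓ.descFactorial k : ℝ) * 2 ^ (ℓ - k)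
        / (k.factorial:ℝ) * (k.descFactorial m : ℝ)) *
      ((-1:ℝ)^(k-m) * 2^(k+1)) =
    (ℓ.choose k : ℝ) * ((ℓ + k).choose k : ℝ) *
      (2 * (-1:ℝ)^k * (k.factorial : ℝ) / ((k - m).factorial : ℝ)) := by
  have e1 : (ℓ.descFactorial k : ℝ) = (k.factorial : ℝ) * (ℓ.choose k : ℝ) := by
    exact_mod_cast congrArg (Nat.cast : ℕ → ℝ) (Nat.descFactorial_eq_factorial_mul_choose ℓ k)
  have e2 : ((k - m).factorial : ℝ) * (k.descFactorial m : ℝ) = (k.factorial : ℝ) := by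
    exact_mod_cast congrArg (Nat.cast : ℕ → ℝ) (Nat.factorial_mul_descFactorial hmk)
  have hkm0 : ((k - m).factorial : ℝ) ≠ 0 := Nat.cast_ne_zero.2 (Nat.factorial_ne_zero _)
  have hk0 : ((k).factorial : ℝ) ≠ 0 := Nat.cast_ne_zero.2 (Nat.factorial_ne_zero _)
  have hl0 : ((ℓ).factorial : ℝ) ≠ 0 := Nat.cast_ne_zero.2 (Nat.factorial_ne_zero _)
  have e2' : (k.descFactorial m : ℝ) = (k.factorial : ℝ) / ((k - m).factorial : ℝ) := by
    field_simp [← e2]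
    linarith [e2]
  have e3 : (2:ℝ) ^ (ℓ - k) = 2 ^ ℓ / 2 ^ k := by
    rw [eq_div_iff (by positivity), ← pow_add]; congr 1; omega
  have e4 : (-1:ℝ)^(k-m) = (-1)^k * (-1)^m := by
    rw [← pow_add, show k + m = k - m + 2*m by omega, pow_add, pow_mul]; norm_num
  have e6 : (-1:ℝ)^(m*2) = 1 := by rw [mul_comm, pow_mul]; norm_num
  rw [e1, e2', e3, e4]
  field_simp
  ring_nf
  rw [e6]
  ring_nf

theorem integral_assocLegendre (ℓ m : ℕ) (hm : 1 ≤ m) (hmℓ : m ≤ ℓ)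
    (γ₁ γ₂ : ℝ) (h₁ : -1 ≤ γ₁) (h₁₂ : γ₁ < γ₂) (h₂ : γ₂ ≤ 1) :
    ∫ u in γ₁..γ₂, assocLegendre ℓ m u =
      ∑ k ∈ Finset.Icc m ℓ,
        (ℓ.choose k : ℝ) * ((ℓ + k).choose k : ℝ) *
          (2 * (-1) ^ k * (k.factorial : ℝ) / ((k - m).factorial : ℝ)) *
          (incBeta ((1 + γ₂) / 2) ((m : ℝ) / 2 + 1) ((k : ℝ) - (m : ℝ) / 2 + 1) -
            incBeta ((1 + γ₁) / 2) ((m : ℝ) / 2 + 1) ((k : ℝ) - (m : ℝ) / 2 + 1)) := by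
  have h12 : γ₁ ≤ γ₂ := le_of_lt h₁₂
  set F : ℕ → ℝ → ℝ := fun k u =>
    ((-1:ℝ)^m * (1 / (2 ^ ℓ * (ℓ.factorial:ℝ))) *
      (((ℓ + k).choose k : ℝ) * (ℓ.factorial:ℝ) * (ℓ.descFactorial k : ℝ) * 2 ^ (ℓ - k)
        / (k.factorial:ℝ) * (k.descFactorial m : ℝ))) *
    ((1 - u ^ 2) ^ ((m:ℝ)/2) * (u - 1) ^ (k - m)) with hF
  have hsub : Finset.Icc m ℓ ⊆ Finset.range (ℓ+1) := fun x hx =>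
    Finset.mem_range.2 (by have := Finset.mem_Icc.1 hx; omega)
  have hA : ∀ u : ℝ, assocLegendre ℓ m u = ∑ k ∈ Finset.Icc m ℓ, F k u := by
    intro u
    have hzero : ∀ x ∈ Finset.range (ℓ+1), x ∉ Finset.Icc m ℓ → F x u = 0 := by
      intro x hx hnx
      have hxm : x < m := by
        have h1 := Finset.mem_range.1 hx
        by_contra hc
        exact hnx (Finset.mem_Icc.2 ⟨by omega, by omega⟩)
      have : (x.descFactorial m : ℝ) = 0 := by
        rw [Nat.descFactorial_eq_zero_iff_lt.2 hxm]; norm_num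
      rw [hF]
      simp only [this]
      ring
    rw [show (∑ k ∈ Finset.Icc m ℓ, F k u) = ∑ k ∈ Finset.range (ℓ+1), F k u from
      Finset.sum_subset hsub hzero]
    rw [assocLegendre, iteratedDeriv_legendreP, hF]
    simp only [Finset.mul_sum]
    apply Finset.sum_congr rfl
    intro k _
    ring
  have hInt : ∀ k ∈ Finset.Icc m ℓ, IntervalIntegrable (F k) MeasureTheory.volume γ₁ γ₂ := by
    intro k _
    apply Continuous.intervalIntegrable
    rw [hF]
    apply Continuous.mul continuous_const
    apply Continuous.mul
    · apply Continuous.rpow_const (continuous_const.sub (continuous_pow 2))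
      intro x
      right
      positivity
    · exact (continuous_id.sub continuous_const).pow _
  rw [intervalIntegral.integral_congr (g := fun u => ∑ k ∈ Finset.Icc m ℓ, F k u)
    (fun u _ => hA u)]
  rw [intervalIntegral.integral_finset_sum hInt]
  apply Finset.sum_congr rfl
  intro k hk
  obtain ⟨hmk, hkl⟩ := Finset.mem_Icc.1 hk
  rw [hF]
  simp only []
  rw [intervalIntegral.integral_const_mul, integral_term m k hm hmk γ₁ γ₂ h₁ h12 h₂]
  have key := coeff_eq ℓ m k hmk hkl
  linear_combination (incBeta ((1 + γ₂) / 2) ((m : ℝ) / 2 + 1) ((k : ℝ) - (m : ℝ) / 2 + 1) -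
    incBeta ((1 + γ₁) / 2) ((m : ℝ) / 2 + 1) ((k : ℝ) - (m : ℝ) / 2 + 1)) * key
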